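/- For any integers m ≥ 1 and n ≥ 1, taking S = [m] = {1,2,…,m}, the sum over all complete (m+1)-ary trees T with n internal vertices of the product over all internal vertices v of T of (x − ℍ_v^{[m]} + 1)/ℍ_v^{[m]} equals (1/(mn+1)) · C((mn+1)x, n), as an identity of polynomials in x over ℚ. -/

import Mathlib

open Polynomial Finset

/-- A complete `m`-ary tree: a `leaf` is an external vertex and a `node`
has exactly `m` linearly ordered subtrees. -/
inductive MTree (m : ℕ) : Type
  | leaf : MTree m
  | node : (Fin m → MTree m) → MTree m

namespace MTree

/-- The number of internal vertices of a complete `m`-ary tree. -/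
def internals {m : ℕ} : MTree m → ℕ
  | leaf => 0
  | node c => 1 + ∑ i, (c i).internals

/-- The first kind of hook length of the root of `node c`: one plus the number of
internal vertices of all subtrees except the rightmost one. -/
def hook1 {m : ℕ} (c : Fin m → MTree m) : ℕ :=
  1 + ∑ i ∈ Finset.univ.filter (fun i : Fin m => (i : ℕ) + 1 < m), (c i).internals

/-- The product of `f (𝓗_v)` over all internal vertices `v` of a complete `m`-ary
tree, where `𝓗_v` is the first kind of hook length. -/
def hookProd1 {m : ℕ} {R : Type*} [CommSemiring R] (f : ℕ → R) : MTree m → R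
  | leaf => 1
  | node c => f (hook1 c) * ∏ i, hookProd1 f (c i)

/-- The number of internal vertices of the `(m+1-|S|)`-ary tree `T^S` obtained from a
complete `(m+1)`-ary tree `T` by recursively deleting, for every `r ∈ S ⊆ [m]`,
the `r`-th subtree of every remaining internal vertex (the label `r ∈ {1,…,m}`
corresponds to the child with index `r - 1`, i.e. to `Fin.castSucc` of `Fin m`). -/
def internalsS {m : ℕ} (S : Finset (Fin m)) : MTree (m + 1) → ℕ
  | leaf => 0
  | node c => 1 + ∑ i ∈ (S.image Fin.castSucc)ᶜ, internalsS S (c i)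

/-- The product of `f (ℍ_v^S)` over all internal vertices `v` of a complete
`(m+1)`-ary tree, where `ℍ_v^S` is the second kind of hook length. -/
def hookProdS {m : ℕ} {R : Type*} [CommSemiring R] (S : Finset (Fin m)) (f : ℕ → R) :
    MTree (m + 1) → R
  | leaf => 1
  | node c => f (internalsS S (node c)) * ∏ i, hookProdS S f (c i)

end MTree


section Binom
variable {S : Type*} [CommRing S] [Algebra ℚ S]

/-- generalized binomial coefficient -/
noncomputable def gbinom (y : S) (n : ℕ) : S :=
  algebraMap ℚ S ((n.factorial : ℚ)⁻¹) * ∏ j ∈ range n, (y - (j : S))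

lemma gbinom_zero (y : S) : gbinom y 0 = 1 := by simp [gbinom]

lemma gbinom_one (y : S) : gbinom y 1 = y := by simp [gbinom]

lemma factorial_cast_succ (n : ℕ) :
    algebraMap ℚ S (((n+1).factorial : ℚ)⁻¹) * ((n:S) + 1) = algebraMap ℚ S ((n.factorial : ℚ)⁻¹) := by
  have : ((n:S) + 1) = algebraMap ℚ S ((n:ℚ) + 1) := by
    push_cast; ring
  rw [this, ← map_mul]
  congr 1
  rw [Nat.factorial_succ]
  have h1 : ((n:ℚ) + 1) ≠ 0 := by positivity
  have h2 : ((n.factorial :ℚ)) ≠ 0 := by positivity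
  field_simp
  push_cast; ring

lemma gbinom_succ_prod (y : S) (n : ℕ) :
    gbinom y (n+1) * ((n:S)+1) = gbinom y n * (y - n) := by
  unfold gbinom
  rw [prod_range_succ]
  calc (algebraMap ℚ S (((n+1).factorial:ℚ)⁻¹) * ((∏ j ∈ range n, (y - (j:S))) * (y - (n:S)))) * ((n:S)+1)
      = (algebraMap ℚ S (((n+1).factorial:ℚ)⁻¹) * ((n:S)+1)) * ((∏ j ∈ range n, (y - (j:S))) * (y - (n:S))) := by ring
    _ = algebraMap ℚ S ((n.factorial:ℚ)⁻¹) * ((∏ j ∈ range n, (y - (j:S))) * (y - (n:S))) := by rw [factorial_cast_succ]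
    _ = algebraMap ℚ S ((n.factorial:ℚ)⁻¹) * (∏ j ∈ range n, (y - (j:S))) * (y - (n:S)) := by ring

/-- shifted product form: `∏_{j<n} (y - 1 - j) = ∏_{j<n} (y - (j+1))`. -/
lemma prod_shift (y : S) (n : ℕ) :
    ∏ j ∈ range n, (y - 1 - (j : S)) = ∏ j ∈ range n, (y - ((j:S)+1)) := by
  apply prod_congr rfl; intro j _; ring

/-- P1: `(y - n) * gbinom y n = y * gbinom (y-1) n`. -/
lemma gbinom_P1 (y : S) (n : ℕ) :
    (y - (n:S)) * gbinom y n = y * gbinom (y - 1) n := by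
  unfold gbinom
  rw [prod_shift]
  have h1 : (y - (n:S)) * ∏ j ∈ range n, (y - (j:S)) = ∏ j ∈ range (n+1), (y - (j:S)) := by
    rw [prod_range_succ]; ring
  have h2 : y * ∏ j ∈ range n, (y - ((j:S)+1)) = ∏ j ∈ range (n+1), (y - (j:S)) := by
    rw [prod_range_succ']
    push_cast
    ring
  calc (y - (n:S)) * (algebraMap ℚ S ((n.factorial:ℚ)⁻¹) * ∏ j ∈ range n, (y - (j:S)))
      = algebraMap ℚ S ((n.factorial:ℚ)⁻¹) * ((y - (n:S)) * ∏ j ∈ range n, (y - (j:S))) := by ring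
    _ = algebraMap ℚ S ((n.factorial:ℚ)⁻¹) * (y * ∏ j ∈ range n, (y - ((j:S)+1))) := by rw [h1, h2]
    _ = y * (algebraMap ℚ S ((n.factorial:ℚ)⁻¹) * ∏ j ∈ range n, (y - ((j:S)+1))) := by ring

/-- P2: `(n+1) * gbinom y (n+1) = y * gbinom (y-1) n`. -/
lemma gbinom_P2 (y : S) (n : ℕ) :
    ((n:S)+1) * gbinom y (n+1) = y * gbinom (y - 1) n := by
  unfold gbinom
  rw [prod_shift]
  have h2 : y * ∏ j ∈ range n, (y - ((j:S)+1)) = ∏ j ∈ range (n+1), (y - (j:S)) := by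
    rw [prod_range_succ']; push_cast; ring
  calc ((n:S)+1) * (algebraMap ℚ S (((n+1).factorial:ℚ)⁻¹) * ∏ j ∈ range (n+1), (y - (j:S)))
      = (algebraMap ℚ S (((n+1).factorial:ℚ)⁻¹) * ((n:S)+1)) * ∏ j ∈ range (n+1), (y - (j:S)) := by ring
    _ = algebraMap ℚ S ((n.factorial:ℚ)⁻¹) * ∏ j ∈ range (n+1), (y - (j:S)) := by rw [factorial_cast_succ]
    _ = y * (algebraMap ℚ S ((n.factorial:ℚ)⁻¹) * ∏ j ∈ range n, (y - ((j:S)+1))) := by rw [← h2]; ring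

/-- Pascal. -/
lemma gbinom_pascal (y : S) (n : ℕ) :
    gbinom y (n+1) = gbinom (y-1) (n+1) + gbinom (y-1) n := by
  unfold gbinom
  rw [prod_shift, prod_shift]
  have e1 : ∏ j ∈ range (n+1), (y - ((j:S)+1)) = (∏ j ∈ range n, (y - ((j:S)+1))) * (y - 1 - (n:S)) := by
    rw [prod_range_succ]; push_cast; ring
  rw [e1]
  have e2 : ∏ j ∈ range (n+1), (y - (j:S)) = y * ∏ j ∈ range n, (y - ((j:S)+1)) := by
    rw [prod_range_succ']; push_cast; ring
  rw [e2]
  set Q := ∏ j ∈ range n, (y - ((j:S)+1))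
  have : algebraMap ℚ S ((n.factorial:ℚ)⁻¹) * Q
      = algebraMap ℚ S (((n+1).factorial:ℚ)⁻¹) * (((n:S)+1) * Q) := by
    rw [← mul_assoc, factorial_cast_succ]
  rw [this]
  ring

lemma gbinom_zero_left (n : ℕ) : gbinom (0:S) (n+1) = 0 := by
  unfold gbinom
  rw [prod_eq_zero (mem_range.2 (Nat.succ_pos n)) (by simp)]
  simp

lemma gbinom_map {S' : Type*} [CommRing S'] [Algebra ℚ S'] (φ : S →+* S')
    (hφ : ∀ q : ℚ, φ (algebraMap ℚ S q) = algebraMap ℚ S' q) (y : S) (n : ℕ) :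
    φ (gbinom y n) = gbinom (φ y) n := by
  unfold gbinom
  rw [map_mul, hφ, map_prod]
  congr 1
  apply prod_congr rfl
  intro j _
  rw [map_sub, map_natCast]

end Binom
section FC
variable {S : Type*} [CommRing S] [Algebra ℚ S]

/-- generalized Fuss–Catalan element `A_n(a,b)`. -/
noncomputable def gfc (a b : S) : ℕ → S
  | 0 => 1
  | (n+1) => gbinom (a - 1 + ((n:S)+1) * b) (n+1) - (b - 1) * gbinom (a - 1 + ((n:S)+1) * b) n

lemma gfc_zero (a b : S) : gfc a b 0 = 1 := rfl

lemma gfc_succ (a b : S) (n : ℕ) :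
    gfc a b (n+1) = gbinom (a - 1 + ((n:S)+1) * b) (n+1) - (b - 1) * gbinom (a - 1 + ((n:S)+1) * b) n := rfl

lemma gfc_one (a b : S) : gfc a b 1 = a := by
  rw [gfc_succ, gbinom_one, gbinom_zero]
  push_cast
  ring

lemma inv_nat_succ_mul (n : ℕ) :
    algebraMap ℚ S (((n:ℚ)+1)⁻¹) * ((n:S)+1) = 1 := by
  have : ((n:S)+1) = algebraMap ℚ S ((n:ℚ)+1) := by push_cast; ring
  rw [this, ← map_mul, inv_mul_cancel₀ (by positivity), map_one]

lemma gfc_rec (a b : S) (n : ℕ) :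
    gfc a b (n+1) = gfc (a-1) b (n+1) + gfc (a-1+b) b n := by
  cases n with
  | zero => rw [gfc_one, gfc_one, gfc_zero]; ring
  | succ k =>
    rw [gfc_succ, gfc_succ, gfc_succ]
    have e1 : a - 1 - 1 + ((k:S)+1+1) * b = (a - 1 + ((k:S)+1+1) * b) - 1 := by ring
    have e2 : a - 1 + b - 1 + ((k:S)+1) * b = (a - 1 + ((k:S)+1+1) * b) - 1 := by ring
    push_cast
    rw [e1, e2]
    set y := a - 1 + ((k:S)+1+1) * b with hy
    rw [gbinom_pascal y (k+1), gbinom_pascal y k]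
    ring

lemma gfc_zero_left (b : S) (n : ℕ) : gfc 0 b (n+1) = 0 := by
  rw [gfc_succ]
  set y := (0:S) - 1 + ((n:S)+1) * b with hy
  have key : gbinom y (n+1) * ((n:S)+1) = gbinom y n * (((n:S)+1) * (b - 1)) := by
    rw [gbinom_succ_prod]
    congr 1
    rw [hy]; push_cast; ring
  have h2 : gbinom y (n+1) = (b-1) * gbinom y n := by
    calc gbinom y (n+1) = algebraMap ℚ S (((n:ℚ)+1)⁻¹) * ((n:S)+1) * gbinom y (n+1) := by
            rw [inv_nat_succ_mul]; ring
      _ = algebraMap ℚ S (((n:ℚ)+1)⁻¹) * (gbinom y (n+1) * ((n:S)+1)) := by ring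
      _ = algebraMap ℚ S (((n:ℚ)+1)⁻¹) * (gbinom y n * (((n:S)+1) * (b - 1))) := by rw [key]
      _ = (algebraMap ℚ S (((n:ℚ)+1)⁻¹) * ((n:S)+1)) * (gbinom y n * (b-1)) := by ring
      _ = (b-1) * gbinom y n := by rw [inv_nat_succ_mul]; ring
  rw [h2]
  ring

lemma gfc_map {S' : Type*} [CommRing S'] [Algebra ℚ S'] (φ : S →+* S')
    (hφ : ∀ q : ℚ, φ (algebraMap ℚ S q) = algebraMap ℚ S' q) (a b : S) (n : ℕ) :
    φ (gfc a b n) = gfc (φ a) (φ b) n := by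
  cases n with
  | zero => simp [gfc_zero]
  | succ k =>
    rw [gfc_succ, gfc_succ, map_sub, map_mul, gbinom_map φ hφ, gbinom_map φ hφ]
    push_cast
    simp [map_sub, map_add, map_one, map_mul, map_natCast]

/-- `(a + n b) ⬝ A_n(a,b) = a ⬝ C(a + n b, n)` -/
lemma gfc_mul (a b : S) (n : ℕ) :
    (a + (n:S) * b) * gfc a b n = a * gbinom (a + (n:S) * b) n := by
  cases n with
  | zero => simp [gfc_zero, gbinom_zero]
  | succ k =>
    rw [gfc_succ]
    set y := a + ((k:S)+1) * b with hy
    have harg : a - 1 + ((k:S)+1) * b = y - 1 := by rw [hy]; ring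
    rw [harg]
    have p1 : (y - ((k:S)+1)) * gbinom y (k+1) = y * gbinom (y - 1) (k+1) := by
      have := gbinom_P1 y (k+1); push_cast at this ⊢; linear_combination this
    have p2 : ((k:S)+1) * gbinom y (k+1) = y * gbinom (y - 1) k := by
      exact gbinom_P2 y k
    push_cast
    calc y * (gbinom (y-1) (k+1) - (b-1) * gbinom (y-1) k)
        = y * gbinom (y-1) (k+1) - (b-1) * (y * gbinom (y-1) k) := by ring
      _ = (y - ((k:S)+1)) * gbinom y (k+1) - (b-1) * (((k:S)+1) * gbinom y (k+1)) := by rw [p1, p2]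
      _ = (y - ((k:S)+1) * b) * gbinom y (k+1) := by ring
      _ = a * gbinom y (k+1) := by rw [hy]; ring_nf

end FC
section Identities

abbrev Qx := Polynomial ℚ

namespace HookAux

open Polynomial

/-- composition-with-`q` ring hom on `Qx[Y]`. -/
noncomputable def cmp (q : Polynomial Qx) : Polynomial Qx →+* Polynomial Qx :=
  eval₂RingHom (C : Qx →+* Polynomial Qx) q

lemma cmp_apply (q p : Polynomial Qx) : cmp q p = p.comp q := rfl

lemma cmp_algebraMap (q : Polynomial Qx) (r : ℚ) :
    cmp q (algebraMap ℚ (Polynomial Qx) r) = algebraMap ℚ (Polynomial Qx) r := by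
  have : algebraMap ℚ (Polynomial Qx) r = C (algebraMap ℚ Qx r) := rfl
  rw [this, cmp_apply, C_comp]

lemma evalRingHom_algebraMap (a : Qx) (r : ℚ) :
    evalRingHom a (algebraMap ℚ (Polynomial Qx) r) = algebraMap ℚ Qx r := by
  have : algebraMap ℚ (Polynomial Qx) r = C (algebraMap ℚ Qx r) := rfl
  rw [this, coe_evalRingHom, eval_C]

/-- constancy lemma -/
lemma eq_zero_of_comp_sub_one (p : Polynomial Qx)
    (h : p.comp (X - 1) = p) (h0 : p.eval 0 = 0) : p = 0 := by
  have key : ∀ n : ℕ, p.eval (-(n : Qx)) = 0 := by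
    intro n
    induction n with
    | zero => simpa using h0
    | succ k ih =>
      have step : p.eval (-(k:Qx) - 1) = p.eval (-(k:Qx)) := by
        conv_rhs => rw [← h]
        rw [eval_comp]
        simp
      have harg : (-(((k+1):ℕ) : Qx)) = -(k:Qx) - 1 := by push_cast; ring
      rw [harg, step]
      exact ih
  apply Polynomial.eq_zero_of_infinite_isRoot
  apply Set.Infinite.mono (s := (fun n : ℕ => -(n:Qx)) '' Set.univ)
  · rintro x ⟨n, -, rfl⟩
    exact key n
  · apply Set.Infinite.image
    · intro a _ b _ hab
      have h2 : (a : Qx) = b := neg_injective hab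
      exact_mod_cast h2
    · exact Set.infinite_univ

end HookAux
end Identities
namespace HookAux
open Polynomial Finset

lemma cmp_X (q : Polynomial Qx) : cmp q X = q := by simp [cmp_apply]

lemma cmp_C (q : Polynomial Qx) (x : Qx) : cmp q (C x) = C x := by simp [cmp_apply]

theorem Vid (b : Qx) : ∀ (n : ℕ), ∀ (c : Qx),
    (∑ k ∈ Finset.range (n+1), gfc (X : Polynomial Qx) (C b) k *
        gbinom ((C c : Polynomial Qx) + ((n - k : ℕ) : Polynomial Qx) * C b) (n - k))
      = gbinom ((X : Polynomial Qx) + C c + ((n : ℕ) : Polynomial Qx) * C b) n := by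
  intro n
  induction n with
  | zero =>
    intro c
    simp [gfc_zero, gbinom_zero]
  | succ n ih =>
    intro c
    set L : Polynomial Qx := ∑ k ∈ Finset.range (n+1+1), gfc (X : Polynomial Qx) (C b) k *
        gbinom ((C c : Polynomial Qx) + ((n+1 - k : ℕ) : Polynomial Qx) * C b) (n+1 - k) with hL
    set R : Polynomial Qx := gbinom ((X : Polynomial Qx) + C c + ((n+1 : ℕ) : Polynomial Qx) * C b) (n+1) with hR
    -- push `cmp (X-1)` through L
    have cmpL : cmp (X - 1) L = ∑ k ∈ Finset.range (n+1+1), gfc ((X : Polynomial Qx) - 1) (C b) k *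
        gbinom ((C c : Polynomial Qx) + ((n+1 - k : ℕ) : Polynomial Qx) * C b) (n+1 - k) := by
      rw [hL, map_sum]
      refine Finset.sum_congr rfl fun k _ => ?_
      rw [map_mul, gfc_map _ (cmp_algebraMap _), gbinom_map _ (cmp_algebraMap _)]
      simp [cmp_X, cmp_C]
    -- the difference L - cmp (X-1) L
    have diffL : L - cmp (X - 1) L
        = ∑ k ∈ Finset.range (n+1), gfc ((X : Polynomial Qx) - 1 + C b) (C b) k *
            gbinom ((C c : Polynomial Qx) + ((n - k : ℕ) : Polynomial Qx) * C b) (n - k) := by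
      rw [cmpL, hL, ← Finset.sum_sub_distrib]
      have : ∀ k, gfc (X : Polynomial Qx) (C b) k *
            gbinom ((C c : Polynomial Qx) + ((n+1 - k : ℕ) : Polynomial Qx) * C b) (n+1 - k)
          - gfc ((X : Polynomial Qx) - 1) (C b) k *
            gbinom ((C c : Polynomial Qx) + ((n+1 - k : ℕ) : Polynomial Qx) * C b) (n+1 - k)
          = (gfc (X : Polynomial Qx) (C b) k - gfc ((X : Polynomial Qx) - 1) (C b) k) *
            gbinom ((C c : Polynomial Qx) + ((n+1 - k : ℕ) : Polynomial Qx) * C b) (n+1 - k) := by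
        intro k; ring
      rw [Finset.sum_congr rfl fun k _ => this k]
      rw [Finset.sum_range_succ']
      simp only [gfc_zero, sub_self, zero_mul, add_zero]
      refine Finset.sum_congr rfl fun k _ => ?_
      have h1 : gfc (X : Polynomial Qx) (C b) (k+1) - gfc ((X:Polynomial Qx) - 1) (C b) (k+1)
          = gfc ((X:Polynomial Qx) - 1 + C b) (C b) k := by
        rw [gfc_rec (X : Polynomial Qx) (C b) k]; ring
      rw [h1, Nat.succ_sub_succ]
    -- IH composed with (X - 1 + C b)
    have ihc : ∑ k ∈ Finset.range (n+1), gfc ((X : Polynomial Qx) - 1 + C b) (C b) k *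
            gbinom ((C c : Polynomial Qx) + ((n - k : ℕ) : Polynomial Qx) * C b) (n - k)
        = gbinom ((X : Polynomial Qx) - 1 + C b + C c + ((n:ℕ) : Polynomial Qx) * C b) n := by
      have := congrArg (cmp ((X : Polynomial Qx) - 1 + C b)) (ih c)
      rw [map_sum] at this
      rw [gbinom_map _ (cmp_algebraMap _)] at this
      simp only [map_mul, map_add, map_natCast, cmp_X, cmp_C] at this
      rw [← this]
      refine Finset.sum_congr rfl fun k _ => ?_
      rw [gfc_map _ (cmp_algebraMap _), gbinom_map _ (cmp_algebraMap _)]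
      simp [cmp_X, cmp_C]
    -- R - cmp R via Pascal
    have cmpR : cmp (X - 1) R = gbinom ((X : Polynomial Qx) - 1 + C c + ((n+1 : ℕ) : Polynomial Qx) * C b) (n+1) := by
      rw [hR, gbinom_map _ (cmp_algebraMap _)]
      simp [cmp_X, cmp_C]
    have diffR : R - cmp (X - 1) R
        = gbinom ((X : Polynomial Qx) - 1 + C b + C c + ((n:ℕ) : Polynomial Qx) * C b) n := by
      rw [cmpR, hR]
      have hp := gbinom_pascal ((X : Polynomial Qx) + C c + ((n+1 : ℕ) : Polynomial Qx) * C b) n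
      have e1 : (X : Polynomial Qx) + C c + ((n+1 : ℕ) : Polynomial Qx) * C b - 1
          = (X : Polynomial Qx) - 1 + C c + ((n+1 : ℕ) : Polynomial Qx) * C b := by push_cast; ring
      have e2 : (X : Polynomial Qx) + C c + ((n+1 : ℕ) : Polynomial Qx) * C b - 1
          = (X : Polynomial Qx) - 1 + C b + C c + ((n:ℕ) : Polynomial Qx) * C b := by push_cast; ring
      rw [hp, e1, ← e1, e2]
      ring
    -- constancy
    have hcomp : (L - R).comp (X - 1) = L - R := by
      have : cmp (X - 1) (L - R) = L - R := by
        rw [map_sub]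
        have := diffL.trans (ihc.trans diffR.symm)
        -- L - cmpL = R - cmpR  ⇒ cmpL - cmpR = L - R
        linear_combination -this
      exact this
    have heval : (L - R).eval 0 = 0 := by
      have hLe : Polynomial.eval (0 : Qx) L = gbinom ((c : Qx) + ((n+1 : ℕ) : Qx) * b) (n+1) := by
        rw [hL]
        have : Polynomial.eval (0:Qx) (∑ k ∈ Finset.range (n+1+1), gfc (X : Polynomial Qx) (C b) k *
            gbinom ((C c : Polynomial Qx) + ((n+1 - k : ℕ) : Polynomial Qx) * C b) (n+1 - k))
            = ∑ k ∈ Finset.range (n+1+1), gfc (0:Qx) b k * gbinom (c + ((n+1 - k : ℕ) : Qx) * b) (n+1-k) := by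
          rw [← coe_evalRingHom, map_sum]
          refine Finset.sum_congr rfl fun k _ => ?_
          rw [map_mul, gfc_map _ (evalRingHom_algebraMap 0), gbinom_map _ (evalRingHom_algebraMap 0)]
          simp
        rw [this]
        rw [Finset.sum_eq_single_of_mem 0 (Finset.mem_range.2 (Nat.succ_pos _))]
        · simp [gfc_zero]
        · intro k _ hk
          obtain ⟨j, rfl⟩ := Nat.exists_eq_succ_of_ne_zero hk
          rw [gfc_zero_left]
          ring
      have hRe : Polynomial.eval (0 : Qx) R = gbinom ((c : Qx) + ((n+1 : ℕ) : Qx) * b) (n+1) := by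
        rw [hR, ← coe_evalRingHom, gbinom_map _ (evalRingHom_algebraMap 0)]
        simp
      rw [eval_sub, hLe, hRe, sub_self]
    have := eq_zero_of_comp_sub_one (L - R) hcomp heval
    have := sub_eq_zero.mp this
    exact this

end HookAux
namespace HookAux
open Polynomial Finset

theorem Wid (b : Qx) : ∀ (n : ℕ), ∀ (c : Qx),
    (∑ k ∈ Finset.range (n+1), gbinom (X : Polynomial Qx) k *
        gfc (((k : ℕ) : Polynomial Qx) * C b + C c) (C b) (n - k))
      = gfc ((X : Polynomial Qx) + C c) (C b) n := by
  intro n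
  induction n with
  | zero =>
    intro c
    simp [gfc_zero, gbinom_zero]
  | succ n ih =>
    intro c
    set L : Polynomial Qx := ∑ k ∈ Finset.range (n+1+1), gbinom (X : Polynomial Qx) k *
        gfc (((k : ℕ) : Polynomial Qx) * C b + C c) (C b) (n+1 - k) with hL
    set R : Polynomial Qx := gfc ((X : Polynomial Qx) + C c) (C b) (n+1) with hR
    have cmpL : cmp (X - 1) L = ∑ k ∈ Finset.range (n+1+1), gbinom ((X : Polynomial Qx) - 1) k *
        gfc (((k : ℕ) : Polynomial Qx) * C b + C c) (C b) (n+1 - k) := by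
      rw [hL, map_sum]
      refine Finset.sum_congr rfl fun k _ => ?_
      rw [map_mul, gfc_map _ (cmp_algebraMap _), gbinom_map _ (cmp_algebraMap _)]
      simp [cmp_X, cmp_C]
    have diffL : L - cmp (X - 1) L
        = ∑ k ∈ Finset.range (n+1), gbinom ((X : Polynomial Qx) - 1) k *
            gfc (((k : ℕ) : Polynomial Qx) * C b + C (c + b)) (C b) (n - k) := by
      rw [cmpL, hL, ← Finset.sum_sub_distrib]
      have : ∀ k, gbinom (X : Polynomial Qx) k *
            gfc (((k : ℕ) : Polynomial Qx) * C b + C c) (C b) (n+1 - k)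
          - gbinom ((X : Polynomial Qx) - 1) k *
            gfc (((k : ℕ) : Polynomial Qx) * C b + C c) (C b) (n+1 - k)
          = (gbinom (X : Polynomial Qx) k - gbinom ((X : Polynomial Qx) - 1) k) *
            gfc (((k : ℕ) : Polynomial Qx) * C b + C c) (C b) (n+1 - k) := by
        intro k; ring
      rw [Finset.sum_congr rfl fun k _ => this k]
      rw [Finset.sum_range_succ']
      simp only [gbinom_zero, sub_self, zero_mul, add_zero]
      refine Finset.sum_congr rfl fun k _ => ?_
      have h1 : gbinom (X : Polynomial Qx) (k+1) - gbinom ((X:Polynomial Qx) - 1) (k+1)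
          = gbinom ((X:Polynomial Qx) - 1) k := by
        rw [gbinom_pascal (X : Polynomial Qx) k]; ring
      have h2 : (((k+1 : ℕ) : Polynomial Qx)) * C b + C c
          = ((k : ℕ) : Polynomial Qx) * C b + C (c + b) := by
        rw [map_add]; push_cast; ring
      rw [h1, Nat.succ_sub_succ, h2]
    have ihc : ∑ k ∈ Finset.range (n+1), gbinom ((X : Polynomial Qx) - 1) k *
            gfc (((k : ℕ) : Polynomial Qx) * C b + C (c + b)) (C b) (n - k)
        = gfc ((X : Polynomial Qx) - 1 + C (c + b)) (C b) n := by
      simp only [map_add]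
      have := congrArg (cmp ((X : Polynomial Qx) - 1)) (ih (c + b))
      rw [map_sum] at this
      rw [gfc_map _ (cmp_algebraMap _)] at this
      simp only [map_mul, map_add, map_natCast, cmp_X, cmp_C] at this
      rw [← this]
      refine Finset.sum_congr rfl fun k _ => ?_
      rw [gfc_map _ (cmp_algebraMap _), gbinom_map _ (cmp_algebraMap _)]
      simp [cmp_X, cmp_C]
    have cmpR : cmp (X - 1) R = gfc ((X : Polynomial Qx) - 1 + C c) (C b) (n+1) := by
      rw [hR, gfc_map _ (cmp_algebraMap _)]
      simp [cmp_X, cmp_C]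
    have diffR : R - cmp (X - 1) R = gfc ((X : Polynomial Qx) - 1 + C (c + b)) (C b) n := by
      rw [cmpR, hR]
      have hp := gfc_rec ((X : Polynomial Qx) + C c) (C b) n
      have e1 : (X : Polynomial Qx) + C c - 1 = (X : Polynomial Qx) - 1 + C c := by ring
      have e2 : (X : Polynomial Qx) + C c - 1 + C b = (X : Polynomial Qx) - 1 + C (c + b) := by
        rw [map_add]; ring
      rw [hp, e2, e1]
      ring
    have hcomp : (L - R).comp (X - 1) = L - R := by
      have : cmp (X - 1) (L - R) = L - R := by
        rw [map_sub]
        have := diffL.trans (ihc.trans diffR.symm)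
        linear_combination -this
      exact this
    have heval : (L - R).eval 0 = 0 := by
      have hLe : Polynomial.eval (0 : Qx) L = gfc c b (n+1) := by
        rw [hL]
        have : Polynomial.eval (0:Qx) (∑ k ∈ Finset.range (n+1+1), gbinom (X : Polynomial Qx) k *
            gfc (((k : ℕ) : Polynomial Qx) * C b + C c) (C b) (n+1 - k))
            = ∑ k ∈ Finset.range (n+1+1), gbinom (0:Qx) k * gfc (((k:ℕ) : Qx) * b + c) b (n+1-k) := by
          rw [← coe_evalRingHom, map_sum]
          refine Finset.sum_congr rfl fun k _ => ?_
          rw [map_mul, gfc_map _ (evalRingHom_algebraMap 0), gbinom_map _ (evalRingHom_algebraMap 0)]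
          simp
        rw [this]
        rw [Finset.sum_eq_single_of_mem 0 (Finset.mem_range.2 (Nat.succ_pos _))]
        · simp [gbinom_zero]
        · intro k _ hk
          obtain ⟨j, rfl⟩ := Nat.exists_eq_succ_of_ne_zero hk
          rw [gbinom_zero_left]
          ring
      have hRe : Polynomial.eval (0 : Qx) R = gfc c b (n+1) := by
        rw [hR, ← coe_evalRingHom, gfc_map _ (evalRingHom_algebraMap 0)]
        simp
      rw [eval_sub, hLe, hRe, sub_self]
    exact sub_eq_zero.mp (eq_zero_of_comp_sub_one (L - R) hcomp heval)

end HookAux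
namespace HookAux
open Polynomial Finset

lemma Vid' (n : ℕ) (a b c : Qx) :
    (∑ k ∈ Finset.range (n+1), gfc a b k * gbinom (c + ((n - k : ℕ) : Qx) * b) (n - k))
      = gbinom (a + c + (n : Qx) * b) n := by
  have := congrArg (evalRingHom a) (Vid b n c)
  rw [map_sum, gbinom_map _ (evalRingHom_algebraMap a)] at this
  simp only [map_add, map_mul, map_natCast, coe_evalRingHom, eval_X, eval_C] at this
  rw [← this]
  refine Finset.sum_congr rfl fun k _ => ?_
  have e1 := gfc_map (evalRingHom a) (evalRingHom_algebraMap a)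
  have e2 := gbinom_map (evalRingHom a) (evalRingHom_algebraMap a)
  simp only [coe_evalRingHom] at e1 e2
  rw [e1, e2]
  simp

lemma Wid' (n : ℕ) (a b c : Qx) :
    (∑ k ∈ Finset.range (n+1), gbinom a k * gfc (((k:ℕ) : Qx) * b + c) b (n - k))
      = gfc (a + c) b n := by
  have := congrArg (evalRingHom a) (Wid b n c)
  rw [map_sum, gfc_map _ (evalRingHom_algebraMap a)] at this
  simp only [map_add, map_mul, map_natCast, coe_evalRingHom, eval_X, eval_C] at this
  rw [← this]
  refine Finset.sum_congr rfl fun k _ => ?_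
  have e1 := gfc_map (evalRingHom a) (evalRingHom_algebraMap a)
  have e2 := gbinom_map (evalRingHom a) (evalRingHom_algebraMap a)
  simp only [coe_evalRingHom] at e1 e2
  rw [e1, e2]
  simp

/-- Rothe–Hagen convolution. -/
lemma gfc_conv (n : ℕ) (a b c : Qx) :
    (∑ k ∈ Finset.range (n+1), gfc a b k * gfc c b (n - k)) = gfc (a + c) b n := by
  cases n with
  | zero => simp [gfc_zero]
  | succ n =>
    have expand : ∀ k ∈ Finset.range (n+1+1), gfc a b k * gfc c b (n+1-k)
        = gfc a b k * gbinom ((c - 1) + ((n+1-k : ℕ) : Qx) * b) (n+1-k)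
          - (if k ≤ n then (b-1) * (gfc a b k * gbinom ((c - 1 + b) + ((n-k : ℕ) : Qx) * b) (n-k)) else 0) := by
      intro k hk
      rcases Nat.lt_or_ge k (n+1) with h | h
      · have hk1 : k ≤ n := Nat.lt_succ_iff.mp h
        have hnk : n + 1 - k = (n - k) + 1 := by omega
        rw [if_pos hk1, hnk, gfc_succ]
        have harg : c - 1 + (((n - k : ℕ) : Qx) + 1) * b = c - 1 + (((n - k) + 1 : ℕ) : Qx) * b := by
          push_cast; ring
        have harg2 : c - 1 + (((n - k : ℕ) : Qx) + 1) * b = c - 1 + b + ((n - k : ℕ) : Qx) * b := by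
          ring
        rw [harg] at harg2 ⊢
        rw [← harg2]
        ring
      · have hk1 : k = n + 1 := by
          have := Finset.mem_range.mp hk; omega
        subst hk1
        rw [if_neg (by omega)]
        simp [gfc_zero, gbinom_zero]
    rw [Finset.sum_congr rfl expand, Finset.sum_sub_distrib]
    rw [Vid' (n+1) a b (c-1)]
    have second : (∑ k ∈ Finset.range (n+1+1),
        (if k ≤ n then (b-1) * (gfc a b k * gbinom ((c - 1 + b) + ((n-k : ℕ) : Qx) * b) (n-k)) else 0))
        = (b - 1) * gbinom (a + (c - 1 + b) + (n : Qx) * b) n := by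
      rw [Finset.sum_range_succ, if_neg (by omega), add_zero]
      have : ∀ k ∈ Finset.range (n+1),
          (if k ≤ n then (b-1) * (gfc a b k * gbinom ((c - 1 + b) + ((n-k : ℕ) : Qx) * b) (n-k)) else 0)
          = (b-1) * (gfc a b k * gbinom ((c - 1 + b) + ((n-k : ℕ) : Qx) * b) (n-k)) := by
        intro k hk
        rw [if_pos (Nat.lt_succ_iff.mp (Finset.mem_range.mp hk))]
      rw [Finset.sum_congr rfl this, ← Finset.mul_sum, Vid' n a b (c-1+b)]
    rw [second, gfc_succ]
    have e1 : a + c - 1 + ((n:Qx)+1) * b = a + (c - 1) + ((n+1 : ℕ) : Qx) * b := by push_cast; ring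
    have e2 : a + c - 1 + ((n:Qx)+1) * b = a + (c - 1 + b) + (n : Qx) * b := by ring
    rw [e1, ← e1, e2]

lemma gfc_conv_anti (n : ℕ) (a b c : Qx) :
    (∑ p ∈ HasAntidiagonal.antidiagonal n, gfc a b p.1 * gfc c b p.2) = gfc (a + c) b n := by
  rw [Finset.Nat.sum_antidiagonal_eq_sum_range_succ_mk]
  exact gfc_conv n a b c

lemma gfc_conv_shift (n k : ℕ) (a b c : Qx) :
    (∑ p ∈ HasAntidiagonal.antidiagonal n, gfc a b p.1 * (if k ≤ p.2 then gfc c b (p.2 - k) else 0))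
      = if k ≤ n then gfc (a + c) b (n - k) else 0 := by
  rw [Finset.Nat.sum_antidiagonal_eq_sum_range_succ_mk]
  rcases Nat.lt_or_ge n k with h | h
  · rw [if_neg (by omega)]
    apply Finset.sum_eq_zero
    intro j hj
    rw [if_neg (by omega)]
    ring
  · rw [if_pos h]
    have hsub : Finset.range (n - k + 1) ⊆ Finset.range (n + 1) := Finset.range_subset_range.2 (by omega)
    have hzero : ∀ j ∈ Finset.range (n+1), j ∉ Finset.range (n-k+1) →
        gfc a b j * (if k ≤ n - j then gfc c b (n - j - k) else 0) = 0 := by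
      intro j hj hj'
      rw [Finset.mem_range] at hj
      rw [Finset.mem_range, not_lt] at hj'
      rw [if_neg (by omega), mul_zero]
    calc ∑ j ∈ Finset.range (n+1), gfc a b j * (if k ≤ n - j then gfc c b (n - j - k) else 0)
        = ∑ j ∈ Finset.range (n-k+1), gfc a b j * (if k ≤ n - j then gfc c b (n - j - k) else 0) :=
          (Finset.sum_subset hsub hzero).symm
      _ = ∑ j ∈ Finset.range (n-k+1), gfc a b j * gfc c b ((n-k) - j) := by
          refine Finset.sum_congr rfl fun j hj => ?_
          rw [Finset.mem_range] at hj
          rw [if_pos (by omega)]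
          have harg : n - j - k = (n-k) - j := by omega
          rw [harg]
      _ = gfc (a + c) b (n - k) := gfc_conv (n-k) a b c

end HookAux
namespace HookTree
open Polynomial Finset MTree
open scoped Classical

/-! ### Finiteness of trees with given number of internal vertices -/

lemma internals_eq_zero_iff {N : ℕ} (T : MTree N) : T.internals = 0 ↔ T = leaf := by
  cases T with
  | leaf => simp [MTree.internals]
  | node c => simp [MTree.internals]

lemma finite_le (N n : ℕ) : {T : MTree N | T.internals ≤ n}.Finite := by
  induction n with
  | zero =>
    apply Set.Finite.subset (Set.finite_singleton leaf)
    intro T hT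
    simp only [Set.mem_setOf_eq, Nat.le_zero] at hT
    simp [(internals_eq_zero_iff T).mp hT]
  | succ n ih =>
    have hpi : (Set.univ.pi fun _ : Fin N => {T : MTree N | T.internals ≤ n}).Finite :=
      Set.Finite.pi fun _ => ih
    apply Set.Finite.subset ((hpi.image node).insert leaf)
    intro T hT
    cases T with
    | leaf => exact Set.mem_insert _ _
    | node c =>
      apply Set.mem_insert_of_mem
      refine ⟨c, ?_, rfl⟩
      intro i _
      simp only [Set.mem_setOf_eq]
      have h1 : (c i).internals ≤ ∑ j, (c j).internals :=
        Finset.single_le_sum (f := fun j => (c j).internals) (fun _ _ => Nat.zero_le _)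
          (Finset.mem_univ i)
      have h2 : 1 + ∑ j, (c j).internals ≤ n + 1 := hT
      omega

/-- trees with exactly `n` internal vertices, as a finset -/
noncomputable def TF (N n : ℕ) : Finset (MTree N) :=
  ((finite_le N n).subset (fun T (hT : T ∈ {T : MTree N | T.internals = n}) => le_of_eq hT)).toFinset

lemma mem_TF {N n : ℕ} {T : MTree N} : T ∈ TF N n ↔ T.internals = n :=
  Set.Finite.mem_toFinset _

lemma coe_TF (N n : ℕ) : (TF N n : Set (MTree N)) = {T : MTree N | T.internals = n} :=
  Set.Finite.coe_toFinset _

/-- tuples of `r` trees with total `n` internal vertices -/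
noncomputable def CF (N r n : ℕ) : Finset (Fin r → MTree N) :=
  (Fintype.piFinset fun _ : Fin r => (finite_le N n).toFinset).filter
    (fun c => ∑ i, (c i).internals = n)

lemma mem_CF {N r n : ℕ} {c : Fin r → MTree N} :
    c ∈ CF N r n ↔ ∑ i, (c i).internals = n := by
  unfold CF
  rw [Finset.mem_filter]
  constructor
  · exact fun h => h.2
  · intro h
    refine ⟨?_, h⟩
    rw [Fintype.mem_piFinset]
    intro i
    rw [Set.Finite.mem_toFinset]
    have h1 : (c i).internals ≤ ∑ j, (c j).internals :=
      Finset.single_le_sum (f := fun j => (c j).internals) (fun _ _ => Nat.zero_le _)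
        (Finset.mem_univ i)
    simp only [Set.mem_setOf_eq]
    omega

/-- splitting off the last coordinate of a tuple sum -/
lemma snocSplit (N r n : ℕ) (g : Fin (r+1) → MTree N → ℚ[X]) :
    ∑ c ∈ CF N (r+1) n, ∏ i, g i (c i)
      = ∑ p ∈ HasAntidiagonal.antidiagonal n,
          (∑ c ∈ CF N r p.1, ∏ i : Fin r, g i.castSucc (c i)) *
            (∑ T ∈ TF N p.2, g (Fin.last r) T) := by
  have rhs : ∀ p ∈ HasAntidiagonal.antidiagonal n,
      (∑ c ∈ CF N r p.1, ∏ i : Fin r, g i.castSucc (c i)) * (∑ T ∈ TF N p.2, g (Fin.last r) T)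
      = ∑ q ∈ (CF N r p.1) ×ˢ (TF N p.2), (∏ i : Fin r, g i.castSucc (q.1 i)) * g (Fin.last r) q.2 := by
    intro p _
    rw [Finset.sum_mul_sum, Finset.sum_product]
  rw [Finset.sum_congr rfl rhs]
  rw [← Finset.sum_sigma (HasAntidiagonal.antidiagonal n) (fun p => (CF N r p.1) ×ˢ (TF N p.2))
      (fun x => (∏ i : Fin r, g i.castSucc (x.2.1 i)) * g (Fin.last r) x.2.2)]
  refine Finset.sum_nbij'
    (fun c => ⟨(∑ i : Fin r, (c i.castSucc).internals, (c (Fin.last r)).internals),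
        (Fin.init c, c (Fin.last r))⟩)
    (fun x => Fin.snoc x.2.1 x.2.2) ?_ ?_ ?_ ?_ ?_
  · -- forward membership
    intro c hc
    rw [mem_CF] at hc
    rw [Finset.mem_sigma, Finset.HasAntidiagonal.mem_antidiagonal, Finset.mem_product]
    refine ⟨?_, ?_, ?_⟩
    · rw [← hc, Fin.sum_univ_castSucc]
    · rw [mem_CF]
      rfl
    · rw [mem_TF]
  · -- backward membership
    rintro ⟨⟨p1, p2⟩, c', T⟩ hx
    rw [Finset.mem_sigma, Finset.HasAntidiagonal.mem_antidiagonal, Finset.mem_product] at hx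
    obtain ⟨hp, hc', hT⟩ := hx
    rw [mem_CF] at hc' ⊢
    rw [mem_TF] at hT
    rw [Fin.sum_univ_castSucc]
    simp only [Fin.snoc_castSucc, Fin.snoc_last]
    rw [hc', hT]
    exact hp
  · -- left inverse
    intro c _
    exact Fin.snoc_init_self c
  · -- right inverse
    rintro ⟨⟨p1, p2⟩, c', T⟩ hx
    rw [Finset.mem_sigma, Finset.HasAntidiagonal.mem_antidiagonal, Finset.mem_product] at hx
    obtain ⟨hp, hc', hT⟩ := hx
    rw [mem_CF] at hc'
    rw [mem_TF] at hT
    have e1 : ∑ i : Fin r, ((Fin.snoc c' T : Fin (r+1) → MTree N) i.castSucc).internals = p1 := by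
      simp only [Fin.snoc_castSucc]
      exact hc'
    have e2 : ((Fin.snoc c' T : Fin (r+1) → MTree N) (Fin.last r)).internals = p2 := by
      rw [Fin.snoc_last]
      exact hT
    have e3 : Fin.init (Fin.snoc c' T : Fin (r+1) → MTree N) = c' := by
      simp
    have e4 : (Fin.snoc c' T : Fin (r+1) → MTree N) (Fin.last r) = T := by
      simp
    simp only [e1, e2, e3, e4, hT]
  · -- values
    intro c _
    rw [Fin.prod_univ_castSucc]
    rfl

lemma node_injective (N : ℕ) : Function.Injective (node : (Fin N → MTree N) → MTree N) := by
  intro a b hab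
  injection hab

lemma TF_succ (N n : ℕ) : TF N (n+1) = (CF N N n).image node := by
  ext T
  rw [mem_TF, Finset.mem_image]
  cases T with
  | leaf =>
    simp only [MTree.internals]
    constructor
    · omega
    · rintro ⟨c, _, hc⟩
      exact absurd hc (by simp)
  | node c =>
    simp only [MTree.internals]
    constructor
    · intro h
      exact ⟨c, mem_CF.mpr (by omega), rfl⟩
    · rintro ⟨c', hc', hcc⟩
      have := node_injective N hcc
      subst this
      rw [mem_CF] at hc'
      omega

lemma sum_TF_succ (N n : ℕ) (h : MTree N → ℚ[X]) :
    ∑ T ∈ TF N (n+1), h T = ∑ c ∈ CF N N n, h (node c) :=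
  by rw [TF_succ, Finset.sum_image (fun a _ b _ hab => node_injective N hab)]

end HookTree
namespace HookTree
open Polynomial Finset MTree
open scoped Classical

/-! ### chain length and hook products for `S = univ` -/

/-- the hook function from the theorem -/
noncomputable def fh : ℕ → ℚ[X] := fun h =>
  Polynomial.C ((h : ℚ)⁻¹) * ((X : ℚ[X]) - Polynomial.C ((h : ℚ) - 1))

variable {m : ℕ}

/-- chain length: number of internal vertices on the rightmost path -/
def ch : MTree (m+1) → ℕ := internalsS (Finset.univ : Finset (Fin m))

/-- hook product of the second kind for `S = univ` -/
noncomputable def hp : MTree (m+1) → ℚ[X] :=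
  hookProdS (Finset.univ : Finset (Fin m)) fh

lemma compl_image :
    ((Finset.univ : Finset (Fin m)).image Fin.castSucc)ᶜ = ({Fin.last m} : Finset (Fin (m+1))) := by
  ext i
  rw [Finset.mem_compl, Finset.mem_image, Finset.mem_singleton]
  constructor
  · intro h
    by_contra hne
    exact h (by
      obtain ⟨j, hj⟩ := Fin.exists_castSucc_eq.mpr hne
      exact ⟨j, Finset.mem_univ j, hj⟩)
  · rintro rfl ⟨j, _, hj⟩
    have : (Fin.last m : Fin (m+1)) ≠ Fin.last m := hj ▸ (Fin.exists_castSucc_eq.mp ⟨j, hj⟩)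
    exact this rfl

lemma ch_leaf : ch (leaf : MTree (m+1)) = 0 := rfl

lemma ch_node (c : Fin (m+1) → MTree (m+1)) :
    ch (node c) = 1 + ch (c (Fin.last m)) := by
  show internalsS _ (node c) = _
  rw [internalsS, compl_image, Finset.sum_singleton]
  rfl

lemma hp_leaf : hp (leaf : MTree (m+1)) = 1 := rfl

lemma hp_node (c : Fin (m+1) → MTree (m+1)) :
    hp (node c) = fh (1 + ch (c (Fin.last m))) * ∏ i, hp (c i) := by
  show hookProdS _ _ (node c) = _
  rw [hookProdS, ← ch_node]
  rfl

lemma ch_le_internals (T : MTree (m+1)) : ch T ≤ T.internals := by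
  induction T with
  | leaf => exact le_rfl
  | node c ih =>
    rw [ch_node]
    show _ ≤ (node c).internals
    rw [show (node c).internals = 1 + ∑ i, (c i).internals from rfl]
    have h1 : (c (Fin.last m)).internals ≤ ∑ i, (c i).internals :=
      Finset.single_le_sum (f := fun i => (c i).internals) (fun _ _ => Nat.zero_le _)
        (Finset.mem_univ _)
    have := ih (Fin.last m)
    omega

/-! ### the three generating quantities -/

noncomputable def Fs (m n : ℕ) : ℚ[X] := ∑ T ∈ TF (m+1) n, hp T

noncomputable def Gs (m n k : ℕ) : ℚ[X] :=
  ∑ T ∈ (TF (m+1) n).filter (fun T => ch T = k), hp T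

noncomputable def Hs (m r n : ℕ) : ℚ[X] := ∑ c ∈ CF (m+1) r n, ∏ i : Fin r, hp (c i)

lemma TF_zero : TF (m+1) 0 = {leaf} := by
  ext T
  rw [mem_TF, Finset.mem_singleton, internals_eq_zero_iff]

lemma Fs_zero : Fs m 0 = 1 := by
  rw [Fs, TF_zero, Finset.sum_singleton, hp_leaf]

lemma Gs_zero (k : ℕ) : Gs m 0 k = if k = 0 then 1 else 0 := by
  rw [Gs, TF_zero]
  by_cases hk : k = 0
  · subst hk
    rw [if_pos rfl]
    rw [Finset.filter_singleton, if_pos ch_leaf, Finset.sum_singleton, hp_leaf]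
  · rw [if_neg hk]
    rw [Finset.filter_singleton, if_neg (fun h => hk ((ch_leaf (m := m)) ▸ h.symm)), Finset.sum_empty]

lemma Gs_succ_zero (n : ℕ) : Gs m (n+1) 0 = 0 := by
  rw [Gs]
  convert Finset.sum_empty
  rw [Finset.filter_eq_empty_iff]
  intro T hT
  rw [mem_TF] at hT
  cases T with
  | leaf => simp [MTree.internals] at hT
  | node c => rw [ch_node]; omega

lemma Gs_gt (n k : ℕ) (h : n < k) : Gs m n k = 0 := by
  rw [Gs]
  convert Finset.sum_empty
  rw [Finset.filter_eq_empty_iff]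
  intro T hT
  rw [mem_TF] at hT
  have := ch_le_internals T
  omega

lemma Fs_eq_sum_Gs (n : ℕ) : Fs m n = ∑ k ∈ Finset.range (n+1), Gs m n k := by
  rw [Fs, ← Finset.sum_fiberwise_of_maps_to (g := ch) (t := Finset.range (n+1)) ?_ hp]
  · rfl
  · intro T hT
    rw [mem_TF] at hT
    rw [Finset.mem_range]
    have := ch_le_internals T
    omega

lemma Hs_zero_arity (n : ℕ) : Hs m 0 n = if n = 0 then 1 else 0 := by
  rw [Hs]
  by_cases hn : n = 0
  · subst hn
    rw [if_pos rfl]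
    have hCF : CF (m+1) 0 0 = {fun i : Fin 0 => i.elim0} := by
      ext c
      rw [mem_CF, Finset.mem_singleton]
      constructor
      · intro _
        funext i
        exact i.elim0
      · intro _
        simp
    rw [hCF, Finset.sum_singleton]
    simp
  · rw [if_neg hn]
    convert Finset.sum_empty
    rw [Finset.eq_empty_iff_forall_notMem]
    intro c hc
    rw [mem_CF] at hc
    simp at hc
    exact hn hc.symm

lemma Hs_succ_arity (r n : ℕ) :
    Hs m (r+1) n = ∑ p ∈ HasAntidiagonal.antidiagonal n, Hs m r p.1 * Fs m p.2 := by
  rw [Hs, snocSplit (m+1) r n (fun _ => hp)]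
  rfl

lemma Gs_rec (n k : ℕ) :
    Gs m (n+1) (k+1)
      = fh (k+1) * ∑ p ∈ HasAntidiagonal.antidiagonal n, Hs m m p.1 * Gs m p.2 k := by
  rw [Gs, Finset.sum_filter, sum_TF_succ]
  have step : ∀ c ∈ CF (m+1) (m+1) n,
      (if ch (node c) = k + 1 then hp (node c) else 0)
      = fh (k+1) * ((∏ i : Fin m, hp (c i.castSucc)) *
          (if ch (c (Fin.last m)) = k then hp (c (Fin.last m)) else 0)) := by
    intro c _
    rw [ch_node, hp_node]
    by_cases h : ch (c (Fin.last m)) = k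
    · rw [if_pos (by omega), if_pos h, h]
      rw [Fin.prod_univ_castSucc]
      ring
    · rw [if_neg (by omega), if_neg h]
      ring
  rw [Finset.sum_congr rfl step, ← Finset.mul_sum]
  congr 1
  have := snocSplit (m+1) m n
    (Fin.snoc (fun _ : Fin m => hp) (fun T => if ch T = k then hp T else 0))
  rw [show (∑ c ∈ CF (m+1) (m+1) n, (∏ i : Fin m, hp (c i.castSucc)) *
      (if ch (c (Fin.last m)) = k then hp (c (Fin.last m)) else 0))
    = ∑ c ∈ CF (m+1) (m+1) n, ∏ i : Fin (m+1),
        (Fin.snoc (fun _ : Fin m => hp) (fun T => if ch T = k then hp T else 0) : 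
          Fin (m+1) → MTree (m+1) → ℚ[X]) i (c i) from ?_, this]
  · refine Finset.sum_congr rfl fun p _ => ?_
    congr 1
    · refine Finset.sum_congr rfl fun c _ => ?_
      refine Finset.prod_congr rfl fun i _ => ?_
      rw [Fin.snoc_castSucc]
    · rw [Gs, Finset.sum_filter]
      refine (Finset.sum_congr rfl fun T _ => ?_).symm
      rw [Fin.snoc_last]
  · refine Finset.sum_congr rfl fun c _ => ?_
    rw [Fin.prod_univ_castSucc]
    congr 1
    · refine Finset.prod_congr rfl fun i _ => ?_
      rw [Fin.snoc_castSucc]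
    · rw [Fin.snoc_last]

end HookTree
namespace HookTree
open Polynomial Finset MTree HookAux

/-- `b = m x` -/
noncomputable def bb (m : ℕ) : ℚ[X] := (m : ℚ[X]) * X

noncomputable def Ps (m n : ℕ) : ℚ[X] := gfc (X : ℚ[X]) (bb m) n

noncomputable def gPs (m n k : ℕ) : ℚ[X] :=
  if k ≤ n then gbinom (X : ℚ[X]) k * gfc ((k : ℚ[X]) * bb m) (bb m) (n - k) else 0

lemma fh_mul_gbinom (k : ℕ) :
    fh (k+1) * gbinom (X : ℚ[X]) k = gbinom (X : ℚ[X]) (k+1) := by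
  unfold fh gbinom
  rw [Finset.prod_range_succ, algebraMap_eq]
  have h2 : ((((k+1).factorial : ℕ):ℚ))⁻¹ = (((k+1:ℕ):ℚ))⁻¹ * (((k.factorial : ℕ):ℚ))⁻¹ := by
    rw [Nat.factorial_succ]
    push_cast
    rw [mul_inv]
  rw [h2, map_mul]
  have h1 : Polynomial.C (((k+1:ℕ):ℚ) - 1) = ((k:ℕ) : ℚ[X]) := by
    push_cast
    simp
  rw [h1]
  push_cast
  ring

theorem main (m : ℕ) : ∀ n : ℕ, (Fs m n = Ps m n) ∧ (∀ k, Gs m n k = gPs m n k) := by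
  intro n
  induction n using Nat.strong_induction_on with
  | _ n ih =>
    match n with
    | 0 =>
      constructor
      · rw [Fs_zero, Ps, gfc_zero]
      · intro k
        rw [Gs_zero, gPs]
        by_cases hk : k = 0
        · subst hk
          rw [if_pos rfl, if_pos (le_refl 0), gbinom_zero, gfc_zero, one_mul]
        · rw [if_neg hk, if_neg (by omega)]
    | (n'+1) =>
      -- homogeneous convolution formula, valid for totals ≤ n'
      have hHs : ∀ r, ∀ s, s ≤ n' → Hs m r s = gfc ((r : ℚ[X]) * X) (bb m) s := by
        intro r
        induction r with
        | zero =>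
          intro s _
          rw [Hs_zero_arity]
          have h0 : ((0:ℕ) : ℚ[X]) * X = 0 := by simp
          rw [h0]
          cases s with
          | zero => rw [if_pos rfl, gfc_zero]
          | succ j => rw [if_neg (by omega), gfc_zero_left]
        | succ r ihr =>
          intro s hs
          rw [Hs_succ_arity]
          have hterm : ∀ p ∈ HasAntidiagonal.antidiagonal s, Hs m r p.1 * Fs m p.2
              = gfc ((r : ℚ[X]) * X) (bb m) p.1 * gfc (X : ℚ[X]) (bb m) p.2 := by
            intro p hpmem
            rw [Finset.HasAntidiagonal.mem_antidiagonal] at hpmem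
            rw [ihr p.1 (by omega), (ih p.2 (by omega)).1]
            rfl
          rw [Finset.sum_congr rfl hterm, gfc_conv_anti]
          have harg : ((r : ℚ[X]) * X) + X = (((r+1:ℕ)) : ℚ[X]) * X := by push_cast; ring
          rw [harg]
      have hGs : ∀ k, Gs m (n'+1) k = gPs m (n'+1) k := by
        intro k
        match k with
        | 0 =>
          rw [Gs_succ_zero, gPs, if_pos (by omega), gbinom_zero]
          have h0 : ((0:ℕ) : ℚ[X]) * bb m = 0 := by simp
          rw [h0, Nat.sub_zero, gfc_zero_left]
          ring
        | (k+1) =>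
          rw [Gs_rec]
          have hterm : ∀ p ∈ HasAntidiagonal.antidiagonal n', Hs m m p.1 * Gs m p.2 k
              = gbinom (X:ℚ[X]) k * (gfc (bb m) (bb m) p.1 *
                  (if k ≤ p.2 then gfc ((k : ℚ[X]) * bb m) (bb m) (p.2 - k) else 0)) := by
            intro p hpmem
            rw [Finset.HasAntidiagonal.mem_antidiagonal] at hpmem
            rw [hHs m p.1 (by omega), (ih p.2 (by omega)).2 k, gPs]
            show gfc (bb m) (bb m) p.1 * _ = _
            by_cases hkp : k ≤ p.2
            · rw [if_pos hkp, if_pos hkp]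
              ring
            · rw [if_neg hkp, if_neg hkp]
              ring
          rw [Finset.sum_congr rfl hterm, ← Finset.mul_sum,
            gfc_conv_shift n' k (bb m) (bb m) ((k : ℚ[X]) * bb m)]
          by_cases hk : k ≤ n'
          · rw [if_pos hk, gPs, if_pos (by omega)]
            have harg : bb m + (k : ℚ[X]) * bb m = (((k+1:ℕ)) : ℚ[X]) * bb m := by
              push_cast; ring
            rw [harg, Nat.succ_sub_succ, ← fh_mul_gbinom k]
            ring
          · rw [if_neg hk, gPs, if_neg (by omega)]
            ring
      refine ⟨?_, hGs⟩
      rw [Fs_eq_sum_Gs]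
      have hterm : ∀ k ∈ Finset.range (n'+1+1), Gs m (n'+1) k
          = gbinom (X:ℚ[X]) k * gfc ((k : ℚ[X]) * bb m + 0) (bb m) ((n'+1) - k) := by
        intro k hk
        rw [Finset.mem_range] at hk
        rw [hGs k, gPs, if_pos (by omega), add_zero]
      rw [Finset.sum_congr rfl hterm, Wid' (n'+1) X (bb m) 0, add_zero]
      rfl

end HookTree

/-- **Corollary (S = [m] in Theorem 1.2).**  For `m ≥ 1` and `n ≥ 1`, taking
`S = [m]` (that is, `S = Finset.univ`, so `s = m`),
`∑_{T ∈ 𝒯_{n,m+1}} ∏_{v ∈ 𝓘(T)} (x - ℍ_v^{[m]} + 1)/ℍ_v^{[m]}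
  = (1/(mn+1)) ⬝ C((mn+1)x, n)` in `ℚ[x]`, where
`C(y,n) = y(y-1)⋯(y-n+1)/n!`. -/
theorem hook_length_second_kind_corollary₃ (m n : ℕ) (hm : 1 ≤ m) (hn : 1 ≤ n) :
    (∑ᶠ T ∈ {T : MTree (m + 1) | T.internals = n},
        MTree.hookProdS (Finset.univ : Finset (Fin m)) (fun h =>
          C ((h : ℚ)⁻¹) * ((X : ℚ[X]) - C ((h : ℚ) - 1))) T)
      = C (((m : ℚ) * n + 1)⁻¹ * (n.factorial : ℚ)⁻¹) *
          ∏ j ∈ Finset.range n,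
            (C ((m : ℚ) * n + 1) * (X : ℚ[X]) - C (j : ℚ)) := by
  have h1 : {T : MTree (m + 1) | T.internals = n} = ↑(HookTree.TF (m+1) n) :=
    (HookTree.coe_TF (m+1) n).symm
  rw [h1, finsum_mem_coe_finset]
  have h2 : (∑ T ∈ HookTree.TF (m+1) n,
      MTree.hookProdS (Finset.univ : Finset (Fin m)) (fun h =>
          C ((h : ℚ)⁻¹) * ((X : ℚ[X]) - C ((h : ℚ) - 1))) T) = HookTree.Fs m n := rfl
  rw [h2, (HookTree.main m n).1]
  show gfc X (HookTree.bb m) n = _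
  set q : ℚ := (m:ℚ) * n + 1 with hqdef
  have hq : q ≠ 0 := by positivity
  have harg : (X:ℚ[X]) + (n : ℚ[X]) * HookTree.bb m = C q * X := by
    unfold HookTree.bb
    rw [hqdef, map_add, map_mul, map_one]
    have e1 : C ((m:ℚ)) = ((m : ℕ) : ℚ[X]) := by simp
    have e2 : C ((n:ℚ)) = ((n : ℕ) : ℚ[X]) := by simp
    rw [e1, e2]
    ring
  have key := gfc_mul (X:ℚ[X]) (HookTree.bb m) n
  rw [harg] at key
  have key2 : X * (C q * gfc X (HookTree.bb m) n) = X * gbinom (C q * X) n := by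
    rw [← key]; ring
  have key3 := mul_left_cancel₀ (Polynomial.X_ne_zero) key2
  have final : gfc X (HookTree.bb m) n = C q⁻¹ * gbinom (C q * X) n := by
    calc gfc X (HookTree.bb m) n
        = (C q⁻¹ * C q) * gfc X (HookTree.bb m) n := by
          rw [← map_mul, inv_mul_cancel₀ hq, map_one, one_mul]
      _ = C q⁻¹ * (C q * gfc X (HookTree.bb m) n) := by ring
      _ = C q⁻¹ * gbinom (C q * X) n := by rw [key3]
  rw [final]
  unfold gbinom
  rw [algebraMap_eq, map_mul, mul_assoc]
  have hprod : ∏ j ∈ Finset.range n, (C q * (X:ℚ[X]) - ((j:ℕ) : ℚ[X]))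
      = ∏ j ∈ Finset.range n, (C ((m : ℚ) * n + 1) * (X : ℚ[X]) - C ((j:ℕ) : ℚ)) := by
    refine Finset.prod_congr rfl fun j _ => ?_
    rw [hqdef]
    simp
  rw [← hprod]
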